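/- If X = ℙ(1,a,r) is a weighted projective plane with 1/r(1,a) a residual singularity (gcd(r,a)=1, width gcd(r,a+1) less than local index ℓ₁ = r/gcd(r,a+1)), and ℓ₂ is the local index of 1/a(1,r), then r does not divide (1+a)²; consequently the quantity (1+a)/r + (1+a+r)/(ar) is not congruent to 0 modulo ℤ·(1/ℓ₂). -/

import Mathlib

/-- If `1/r(1,a)` is a residual singularity (coprime `r`, `a`
with width `gcd r (a+1)` less than local index `ℓ₁ = r / gcd r (a+1)`) and
`ℓ₂ = a / gcd a (r+1)` is the local index of `1/a(1,r)`, then `r ∤ (1+a)²`;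
consequently `(1+a)/r + (1+a+r)/(ar)` is not congruent to `0` modulo
`ℤ·(1/ℓ₂)`. -/
theorem stmt16 (r a : ℕ) (hr : 2 ≤ r) (ha : 0 < a) (hco : Nat.gcd r a = 1)
    (hres : Nat.gcd r (a + 1) < r / Nat.gcd r (a + 1)) :
    ¬ (r ∣ (1 + a) ^ 2) ∧
      ¬ ∃ m : ℤ,
        ((1 + a : ℚ) / r + (1 + a + r : ℚ) / (a * r)) =
          (m : ℚ) / ((a / Nat.gcd a (r + 1) : ℕ) : ℚ) := by
  have hk0 : 0 < Nat.gcd r (a + 1) := Nat.gcd_pos_of_pos_left _ (by omega)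
  have hmain : ¬ r ∣ (1 + a) ^ 2 := by
    intro hdvd
    set k := Nat.gcd r (a + 1) with hk
    obtain ⟨l, hl⟩ : k ∣ r := Nat.gcd_dvd_left _ _
    obtain ⟨c, hc⟩ : k ∣ a + 1 := Nat.gcd_dvd_right _ _
    have hcop : Nat.Coprime (r / k) ((a + 1) / k) := Nat.coprime_div_gcd_div_gcd hk0
    have hl1 : r / k = l := by rw [hl]; exact Nat.mul_div_cancel_left _ hk0
    have hc1 : (a + 1) / k = c := by rw [hc]; exact Nat.mul_div_cancel_left _ hk0
    rw [hl1, hc1] at hcop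
    have hdvd' : k * l ∣ k * (k * c ^ 2) := by
      rw [← hl]
      have : (1 + a) ^ 2 = k * (k * c ^ 2) := by
        have : 1 + a = k * c := by omega
        rw [this]; ring
      rwa [← this]
    have hlk : l ∣ k * c ^ 2 := (Nat.mul_dvd_mul_iff_left hk0).mp hdvd'
    have : l ∣ k := (Nat.Coprime.dvd_of_dvd_mul_right (hcop.pow_right 2)) hlk
    have hle : l ≤ k := Nat.le_of_dvd hk0 this
    rw [hl1] at hres
    omega
  refine ⟨hmain, ?_⟩
  rintro ⟨m, hm⟩
  apply hmain
  set g := Nat.gcd a (r + 1) with hg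
  have hg0 : 0 < g := Nat.gcd_pos_of_pos_left _ ha
  have hga : g ∣ a := Nat.gcd_dvd_left _ _
  set L := a / g with hL
  have haL : a = L * g := (Nat.div_mul_cancel hga).symm
  have hL0 : 0 < L := Nat.div_pos (Nat.le_of_dvd ha hga) hg0
  have hr' : (r : ℚ) ≠ 0 := by positivity
  have ha' : (a : ℚ) ≠ 0 := by positivity
  have hL' : (L : ℚ) ≠ 0 := by positivity
  have haLq : (a : ℚ) = L * g := by exact_mod_cast haL
  have key : ((1 + a : ℚ)) ^ 2 + r = m * g * r := by
    field_simp at hm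
    have hLr : (L : ℚ) * r ≠ 0 := by positivity
    apply mul_right_cancel₀ hLr
    rw [haLq] at hm ⊢
    linear_combination (r : ℚ) * hm
  have keyZ : ((1 + a : ℤ)) ^ 2 + r = m * g * r := by exact_mod_cast key
  have : (r : ℤ) ∣ ((1 + a : ℤ)) ^ 2 := ⟨m * g - 1, by linarith⟩
  exact_mod_cast this
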